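/- Every graph represented by a 1-local word is a threshold graph, and conversely every threshold graph is represented by some 1-local word. -/

import Mathlib

open List

variable {α : Type*} [DecidableEq α]

/-- Two distinct letters `a` and `b` alternate in the word `w`:
their projection is an alternating sequence of `a`s and `b`s, both occurring. -/
def Alt (w : List α) (a b : α) : Prop :=
  a ≠ b ∧ a ∈ w ∧ b ∈ w ∧
    (w.filter (fun x => decide (x = a ∨ x = b))).Chain' (· ≠ ·)

/-- The word `w` represents the graph `G` with vertex set `V`:
the alphabet of `w` is `V` and adjacency coincides with alternation. -/
def Represents (w : List α) (V : Finset α) (G : SimpleGraph α) : Prop :=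
  w.toFinset = V ∧ ∀ a b : α, G.Adj a b ↔ Alt w a b

/-- A word is `k`-uniform if every letter of its alphabet occurs exactly `k` times. -/
def KUniform (k : ℕ) (w : List α) : Prop :=
  ∀ a ∈ w, w.count a = k

/-- Number of maximal blocks of `true`s in a boolean word. -/
def blockCount (l : List Bool) : ℕ :=
  ((l.zip (false :: l)).filter (fun p => p.1 && !p.2)).length

/-- `w` is `k`-local witnessed by the marking sequence `σ`. -/
def KLocalWith (k : ℕ) (w σ : List α) : Prop :=
  σ.Nodup ∧ σ.toFinset = w.toFinset ∧
    ∀ i : ℕ, blockCount (w.map (fun x => decide (x ∈ σ.take i))) ≤ k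

/-- `w` is `k`-local: some marking sequence witnesses `k`-locality. -/
def KLocal (k : ℕ) (w : List α) : Prop := ∃ σ : List α, KLocalWith k w σ

/-- The subgraph of `G` induced by `U` (as a graph on the same ambient type). -/
def inducedOn (G : SimpleGraph α) (U : Finset α) : SimpleGraph α where
  Adj a b := G.Adj a b ∧ a ∈ U ∧ b ∈ U
  symm := by
    constructor
    intro a b h
    exact ⟨h.1.symm, h.2.2, h.2.1⟩
  loopless := by
    constructor
    intro a h
    exact G.loopless.irrefl a h.1

/-- Add a vertex `v` dominating the vertex set `V` to the graph `G`. -/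
def addDom (G : SimpleGraph α) (V : Finset α) (v : α) : SimpleGraph α where
  Adj a b := G.Adj a b ∨ (a = v ∧ b ∈ V ∧ b ≠ v) ∨ (b = v ∧ a ∈ V ∧ a ≠ v)
  symm := by
    constructor
    intro a b h
    rcases h with h | h | h
    · exact Or.inl h.symm
    · exact Or.inr (Or.inr h)
    · exact Or.inr (Or.inl h)
  loopless := by
    constructor
    intro a h
    rcases h with h | h | h
    · exact G.loopless.irrefl a h
    · exact h.2.2 h.1
    · exact h.2.2 h.1

/-- Threshold graphs (with explicit vertex set): built from the empty graph
by repeatedly adding isolated or dominating vertices. -/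
inductive IsThreshold : SimpleGraph α → Finset α → Prop
  | empty : IsThreshold ⊥ ∅
  | isolated {G V v} (hv : v ∉ V) (h : IsThreshold G V) : IsThreshold G (insert v V)
  | dominating {G V v} (hv : v ∉ V) (h : IsThreshold G V) :
      IsThreshold (addDom G V v) (insert v V)

/-- Clique-width expressions over label type `L` and vertex type `α`. -/
inductive CWExpr (L α : Type*) where
  | vertex : L → α → CWExpr L α
  | union : CWExpr L α → CWExpr L α → CWExpr L α
  | connect : L → L → CWExpr L α → CWExpr L α
  | relabel : L → L → CWExpr L α → CWExpr L α

/-- The graph of all edges between label `i` and label `j` within `V` under labelling `f`. -/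
def connGraph {L : Type*} [DecidableEq L] (V : Finset α) (f : α → L) (i j : L) :
    SimpleGraph α where
  Adj a b := a ≠ b ∧ a ∈ V ∧ b ∈ V ∧ ((f a = i ∧ f b = j) ∨ (f a = j ∧ f b = i))
  symm := by
    constructor
    intro a b h
    rcases h.2.2.2 with h4 | h4
    · exact ⟨h.1.symm, h.2.2.1, h.2.1, Or.inr ⟨h4.2, h4.1⟩⟩
    · exact ⟨h.1.symm, h.2.2.1, h.2.1, Or.inl ⟨h4.2, h4.1⟩⟩
  loopless := by
    constructor
    intro a h
    exact h.1 rfl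

/-- `Builds e V f G`: the clique-width expression `e` builds the labelled graph
with vertex set `V`, labelling `f` and edge structure `G`. -/
inductive Builds {L : Type*} [DecidableEq L] : CWExpr L α → Finset α → (α → L) → SimpleGraph α → Prop
  | vertex (l : L) (v : α) : Builds (.vertex l v) {v} (fun _ => l) ⊥
  | union {e₁ e₂ V₁ V₂ f₁ f₂ G₁ G₂} (h₁ : Builds e₁ V₁ f₁ G₁) (h₂ : Builds e₂ V₂ f₂ G₂)
      (hd : _root_.Disjoint V₁ V₂) :
      Builds (.union e₁ e₂) (V₁ ∪ V₂) (fun x => if x ∈ V₁ then f₁ x else f₂ x) (G₁ ⊔ G₂)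
  | connect {e V f G} (i j : L) (hij : i ≠ j) (h : Builds e V f G) :
      Builds (.connect i j e) V f (G ⊔ connGraph V f i j)
  | relabel {e V f G} (i j : L) (h : Builds e V f G) :
      Builds (.relabel i j e) V (fun x => if f x = i then j else f x) G

/-- The clique-width of `G` (with vertex set `V`) is at most `k`. -/
def CliqueWidthLE (k : ℕ) (G : SimpleGraph α) (V : Finset α) : Prop :=
  ∃ (e : CWExpr (Fin k) α) (f : α → Fin k), Builds e V f G

/-- The crown graph `H_{n,n}`: complete bipartite minus a perfect matching. -/
def crown (n : ℕ) : SimpleGraph (Fin n ⊕ Fin n) where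
  Adj a b :=
    match a, b with
    | .inl x, .inr y => x ≠ y
    | .inr x, .inl y => x ≠ y
    | _, _ => False
  symm := by
    constructor
    intro a b h
    cases a <;> cases b <;> simp_all
    · exact fun hc => h hc.symm
    · exact fun hc => h hc.symm
  loopless := by
    constructor
    intro a h
    cases a <;> simp_all

/-- The disjoint-union-of-cliques graph associated with a partition `P` of `[n]`. -/
def partGraph {n : ℕ} (P : Finpartition (Finset.univ : Finset (Fin n))) :
    SimpleGraph (Fin n) where
  Adj x y := x ≠ y ∧ ∃ C ∈ P.parts, x ∈ C ∧ y ∈ C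
  symm := by
    constructor
    intro a b h
    obtain ⟨hne, C, hC, h1, h2⟩ := h
    exact ⟨hne.symm, C, hC, h2, h1⟩
  loopless := by
    constructor
    intro a h
    exact h.1 rfl

/-- The word associated with a partition: each block written twice in a row. -/
noncomputable def partWord {n : ℕ} (P : Finpartition (Finset.univ : Finset (Fin n))) : List (Fin n) :=
  (P.parts.toList.map (fun C => C.toList ++ C.toList)).flatten





def bc : Bool → List Bool → ℕ
  | _, [] => 0
  | prev, a :: l => (a && !prev).toNat + bc a l

section BC
lemma bc_eq (prev : Bool) (l : List Bool) :
    ((l.zip (prev :: l)).filter (fun p => p.1 && !p.2)).length = bc prev l := by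
  induction l generalizing prev with
  | nil => rfl
  | cons a l ih =>
    show ((⟨a, prev⟩ :: l.zip (a :: l)).filter _).length = _
    rw [List.filter_cons]
    by_cases h : (a && !prev) = true <;> simp [h, bc, ih, Nat.add_comm]

lemma blockCount_eq (l : List Bool) : blockCount l = bc false l := bc_eq false l

lemma bc_true_le (l : List Bool) : bc true l ≤ bc false l := by
  cases l with
  | nil => simp [bc]
  | cons a l => cases a <;> simp [bc, Nat.add_comm]

lemma bc_false_le (l : List Bool) : bc false l ≤ bc true l + 1 := by
  cases l with
  | nil => simp [bc]
  | cons a l => cases a <;> simp [bc, Nat.add_comm]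

lemma bc_sublist {l₁ l₂ : List Bool} (h : l₁ <+ l₂) : ∀ b, bc b l₁ ≤ bc b l₂ := by
  induction h with
  | slnil => intro b; exact le_refl _
  | @cons l₁ l₂ a _ ih =>
    intro b
    cases a with
    | false =>
      cases b with
      | false => calc bc false l₁ ≤ bc false l₂ := ih false
                  _ ≤ bc false (false :: l₂) := by simp [bc]
      | true => calc bc true l₁ ≤ bc false l₁ := bc_true_le l₁
                  _ ≤ bc false l₂ := ih false
                  _ ≤ bc true (false :: l₂) := by simp [bc]
    | true =>
      cases b with
      | false => calc bc false l₁ ≤ bc true l₁ + 1 := bc_false_le l₁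
                  _ ≤ bc true l₂ + 1 := by simpa using ih true
                  _ = bc false (true :: l₂) := by simp [bc, Nat.add_comm]
      | true => calc bc true l₁ ≤ bc true l₂ := ih true
                  _ = bc true (true :: l₂) := by simp [bc]
  | @cons_cons l₁ l₂ a _ ih =>
    intro b
    simp only [bc]
    exact Nat.add_le_add_left (ih a) _

lemma blockCount_mono {l₁ l₂ : List Bool} (h : l₁ <+ l₂) : blockCount l₁ ≤ blockCount l₂ := by
  rw [blockCount_eq, blockCount_eq]; exact bc_sublist h false

lemma noTFT {l : List Bool} (h : blockCount l ≤ 1) : ¬ ([true, false, true] <+ l) := by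
  intro hs
  have := blockCount_mono hs
  rw [show blockCount [true, false, true] = 2 from rfl] at this
  omega

lemma bc_false_prefix (c : ℕ) (l : List Bool) :
    bc false (List.replicate c false ++ l) = bc false l := by
  induction c with
  | zero => simp
  | succ n ih => simp [List.replicate_succ, bc, ih]

lemma bc_all_false (c : ℕ) (b : Bool) : bc b (List.replicate c false) = 0 := by
  induction c generalizing b with
  | zero => simp [bc]
  | succ n ih => simp [List.replicate_succ, bc, ih]

lemma bc_true_true (d : ℕ) (l : List Bool) :
    bc true (List.replicate d true ++ l) = bc true l := by
  induction d with
  | zero => simp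
  | succ n ih => simp [List.replicate_succ, bc, ih]

lemma blockCount_FTF (c d e : ℕ) :
    blockCount (List.replicate c false ++ List.replicate d true ++ List.replicate e false) ≤ 1 := by
  rw [blockCount_eq, List.append_assoc, bc_false_prefix]
  cases d with
  | zero => simp [bc_all_false]
  | succ n =>
    rw [List.replicate_succ, List.cons_append]
    simp [bc, bc_true_true, bc_all_false]
end BC

section AltLemmas
lemma altfun_comm (a b : α) :
    (fun x => decide (x = a ∨ x = b)) = (fun x : α => decide (x = b ∨ x = a)) := by
  funext x; exact decide_eq_decide.mpr or_comm

lemma Alt_comm {w : List α} {a b : α} : Alt w a b ↔ Alt w b a := by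
  unfold Alt
  rw [altfun_comm]
  constructor <;> rintro ⟨h1, h2, h3, h4⟩ <;> exact ⟨h1.symm, h3, h2, h4⟩

lemma filter_pair_of_not_mem {l : List α} {a b : α} (h : ∀ x ∈ l, x ≠ a) :
    l.filter (fun x => decide (x = a ∨ x = b)) = List.replicate (l.count b) b := by
  have h1 : l.filter (fun x => decide (x = a ∨ x = b)) = l.filter (fun x => x = b) := by
    apply List.filter_congr
    intro x hx
    simp [h x hx]
  rw [h1]
  simpa [List.count] using (List.filter_eq (l := l) b)
end AltLemmas

section Shape
def BR (x y : Bool) : Prop := x = true ∨ y = false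

lemma pairwise_TF (t f : ℕ) :
    List.Pairwise BR (List.replicate t true ++ List.replicate f false) := by
  apply List.pairwise_append.mpr
  refine ⟨?_, ?_, ?_⟩
  · exact List.pairwise_replicate.mpr (Or.inr (Or.inl rfl))
  · exact List.pairwise_replicate.mpr (Or.inr (Or.inr rfl))
  · intro x hx y hy
    exact Or.inl (List.eq_of_mem_replicate hx)

lemma exists_TF_of_pairwise {l : List Bool} (h : List.Pairwise BR l) :
    ∃ a b, l = List.replicate a true ++ List.replicate b false := by
  induction l with
  | nil => exact ⟨0, 0, rfl⟩
  | cons x l ih =>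
    rcases List.pairwise_cons.mp h with ⟨hx, hl⟩
    cases x with
    | true =>
      obtain ⟨a, b, hab⟩ := ih hl
      exact ⟨a + 1, b, by simp [List.replicate_succ, hab]⟩
    | false =>
      refine ⟨0, l.length + 1, ?_⟩
      have : ∀ y ∈ l, y = false := by
        intro y hy
        rcases hx y hy with h | h
        · exact absurd h (by simp)
        · exact h
      rw [List.eq_replicate_iff.mpr ⟨rfl, this⟩ ]
      simp [List.replicate_succ]

lemma sublist_TF {l : List Bool} {t f : ℕ}
    (h : l <+ List.replicate t true ++ List.replicate f false) :
    ∃ a b, l = List.replicate a true ++ List.replicate b false :=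
  exists_TF_of_pairwise ((pairwise_TF t f).sublist h)

lemma map_take_nodup {σ : List α} (hσ : σ.Nodup) (i : ℕ) :
    σ.map (fun x => decide (x ∈ σ.take i)) =
      List.replicate (σ.take i).length true ++ List.replicate (σ.drop i).length false := by
  have hsplit : σ.map (fun x => decide (x ∈ σ.take i)) =
      (σ.take i).map (fun x => decide (x ∈ σ.take i)) ++
        (σ.drop i).map (fun x => decide (x ∈ σ.take i)) := by
    rw [← List.map_append, List.take_append_drop]
  rw [hsplit]
  congr 1
  · apply List.eq_replicate_iff.mpr
    refine ⟨by simp, ?_⟩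
    intro b hb
    rcases List.mem_map.mp hb with ⟨x, hx, rfl⟩
    simp [hx]
  · apply List.eq_replicate_iff.mpr
    refine ⟨by simp, ?_⟩
    intro b hb
    rcases List.mem_map.mp hb with ⟨x, hx, rfl⟩
    have := List.disjoint_take_drop hσ (le_refl i)
    simp only [decide_eq_false_iff_not]
    exact fun h => this h hx
end Shape

lemma klocal_of_struct {wl wr : List α} (hn : wl.Nodup) (hs : wr <+ wl.reverse) :
    KLocalWith 1 (wl ++ wr) wl.reverse := by
  refine ⟨(List.nodup_reverse.mpr hn), ?_, ?_⟩
  · rw [List.toFinset_reverse, List.toFinset_append]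
    have hsub : wr.toFinset ⊆ wl.toFinset := by
      intro a ha
      rw [List.mem_toFinset] at *
      simpa using hs.mem ha
    rw [Finset.union_eq_left.mpr hsub]
  · intro i
    set σ := wl.reverse with hσdef
    set m : α → Bool := fun x => decide (x ∈ σ.take i) with hm
    have hσn : σ.Nodup := (List.nodup_reverse.mpr hn)
    have h1 : σ.map m = List.replicate (σ.take i).length true ++
        List.replicate (σ.drop i).length false := map_take_nodup hσn i
    have h2 : wl.map m = List.replicate (σ.drop i).length false ++
        List.replicate (σ.take i).length true := by
      have : wl = σ.reverse := by rw [hσdef, List.reverse_reverse]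
      rw [this, List.map_reverse, h1]
      simp
    obtain ⟨a, b, hab⟩ : ∃ a b, wr.map m =
        List.replicate a true ++ List.replicate b false := by
      apply sublist_TF (t := (σ.take i).length) (f := (σ.drop i).length)
      rw [← h1]
      exact hs.map m
    rw [List.map_append, h2, hab]
    have heq : (List.replicate (σ.drop i).length false ++ List.replicate (σ.take i).length true)
        ++ (List.replicate a true ++ List.replicate b false) =
        List.replicate (σ.drop i).length false ++ List.replicate ((σ.take i).length + a) true
          ++ List.replicate b false := by
      rw [List.replicate_add]
      simp [List.append_assoc]
      rw [← List.append_assoc, ← List.replicate_add]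
    rw [heq]
    exact blockCount_FTF _ _ _


section Dir2

lemma filter_allv {mid : List α} {v a b : α} (hmid : ∀ x ∈ mid, x = v)
    (ha : a ≠ v) (hb : b ≠ v) :
    mid.filter (fun x => decide (x = a ∨ x = b)) = [] := by
  apply List.filter_eq_nil_iff.mpr
  intro x hx
  have := hmid x hx
  subst this
  simp [Ne.symm ha, Ne.symm hb]

lemma alt_extend_ne {w1 w2 mid : List α} {v a b : α} (ha : a ≠ v) (hb : b ≠ v)
    (hmid : ∀ x ∈ mid, x = v) :
    Alt (w1 ++ mid ++ w2) a b ↔ Alt (w1 ++ w2) a b := by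
  unfold Alt
  have hf : (w1 ++ mid ++ w2).filter (fun x => decide (x = a ∨ x = b)) =
      (w1 ++ w2).filter (fun x => decide (x = a ∨ x = b)) := by
    simp only [List.filter_append, filter_allv hmid ha hb]
    simp
  rw [hf]
  have hma : a ∉ mid := fun h => ha (hmid a h)
  have hmb : b ∉ mid := fun h => hb (hmid b h)
  simp only [List.mem_append]
  constructor
  · rintro ⟨h1, h2, h3, h4⟩
    refine ⟨h1, ?_, ?_, h4⟩
    · rcases h2 with (h | h) | h
      · exact Or.inl h
      · exact absurd h hma
      · exact Or.inr h
    · rcases h3 with (h | h) | h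
      · exact Or.inl h
      · exact absurd h hmb
      · exact Or.inr h
  · rintro ⟨h1, h2, h3, h4⟩
    refine ⟨h1, ?_, ?_, h4⟩
    · rcases h2 with h | h
      · exact Or.inl (Or.inl h)
      · exact Or.inr h
    · rcases h3 with h | h
      · exact Or.inl (Or.inl h)
      · exact Or.inr h

lemma not_alt_vv {w1 w2 : List α} {v : α} (b : α) : ¬ Alt (w1 ++ v :: v :: w2) v b := by
  rintro ⟨hne, _, _, hch⟩
  have hfil : (w1 ++ v :: v :: w2).filter (fun x => decide (x = v ∨ x = b)) =
      (w1.filter (fun x => decide (x = v ∨ x = b))) ++ [v, v] ++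
        (w2.filter (fun x => decide (x = v ∨ x = b))) := by
    simp [List.filter_append, List.filter_cons]
  rw [hfil] at hch
  have : List.Chain' (· ≠ ·) [v, v] := hch.infix ⟨_, _, by rw [← hfil, hfil]⟩
  exact (List.isChain_pair.mp this) rfl

lemma alt_dom {wl wr : List α} {v b : α} (hvl : v ∉ wl) (hvr : v ∉ wr) (hb : b ≠ v)
    (hnl : wl.Nodup) (hnr : wr.Nodup) (hbl : b ∈ wl) :
    Alt (wl ++ v :: wr) v b := by
  refine ⟨Ne.symm hb, by simp, by simp [hbl], ?_⟩
  have hfl : wl.filter (fun x => decide (x = v ∨ x = b)) = [b] := by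
    rw [filter_pair_of_not_mem (fun x hx h => hvl (by rwa [h] at hx))]
    rw [List.count_eq_one_of_mem hnl hbl]
    rfl
  have hfr : wr.filter (fun x => decide (x = v ∨ x = b)) =
      List.replicate (wr.count b) b :=
    filter_pair_of_not_mem (fun x hx h => hvr (by rwa [h] at hx))
  have hcount : wr.count b ≤ 1 := List.nodup_iff_count_le_one.mp hnr b
  have hfilter : (wl ++ v :: wr).filter (fun x => decide (x = v ∨ x = b)) =
      [b] ++ v :: List.replicate (wr.count b) b := by
    simp only [List.filter_append, List.filter_cons, hfl, hfr]
    simp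
  rw [hfilter]
  interval_cases h : wr.count b
  · simp [List.Chain', List.isChain_cons_cons, Ne.symm hb, hb]
  · simp [List.Chain', List.isChain_cons_cons, Ne.symm hb, hb]

lemma no_adj_outside {w : List α} {V : Finset α} {G : SimpleGraph α}
    (hR : Represents w V G) {a : α} (ha : a ∉ V) (b : α) : ¬ G.Adj a b := by
  intro h
  rcases (hR.2 a b).mp h with ⟨_, haw, _, _⟩
  exact ha (hR.1 ▸ List.mem_toFinset.mpr haw)

lemma repr_threshold {G : SimpleGraph α} {V : Finset α} (h : IsThreshold G V) :
    ∃ wl wr : List α, wl.Nodup ∧ wl.toFinset = V ∧ wr <+ wl.reverse ∧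
      Represents (wl ++ wr) V G := by
  induction h with
  | empty =>
    refine ⟨[], [], by simp, by simp, by simp, by simp, ?_⟩
    intro a b
    constructor
    · intro h; exact absurd h (by simp)
    · rintro ⟨_, h, _⟩; exact absurd h (by simp)
  | @isolated G V v hv h ih =>
    obtain ⟨wl, wr, hnl, hVl, hs, hRT, hRA⟩ := ih
    have hwlV : ∀ x, x ∈ wl ↔ x ∈ V := fun x => by rw [← hVl]; simp
    have hwrV : ∀ x, x ∈ wr → x ∈ V := fun x hx => (hwlV x).mp (by simpa using hs.mem hx)
    have hvwl : v ∉ wl := fun h' => hv ((hwlV v).mp h')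
    have hvwr : v ∉ wr := fun h' => hv (hwrV v h')
    refine ⟨wl ++ [v], v :: wr, ?_, ?_, ?_, ?_, ?_⟩
    · simp [List.nodup_append, hnl, hvwl]
      intro a ha hav; exact hvwl (hav ▸ ha)
    · rw [List.toFinset_append, hVl]; ext x; simp [or_comm]
    · rw [List.reverse_append]
      simpa using hs.cons₂ v
    · ext x
      simp only [List.mem_toFinset, List.mem_append, List.mem_cons, Finset.mem_insert,
        List.mem_singleton]
      have h1 := hwlV x
      have h2 := hwrV x
      tauto
    · intro a b
      have hw' : (wl ++ [v]) ++ (v :: wr) = wl ++ [v, v] ++ wr := by simp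
      by_cases hav : a = v
      · rw [hav]
        by_cases hbv : b = v
        · rw [hbv]
          simp only [SimpleGraph.irrefl, false_iff]
          rintro ⟨hne, -⟩
          exact hne rfl
        · constructor
          · intro hadj
            exact absurd hadj (no_adj_outside ⟨hRT, hRA⟩ hv b)
          · intro halt
            rw [show (wl ++ [v]) ++ (v :: wr) = wl ++ v :: v :: wr by simp] at halt
            exact absurd halt (not_alt_vv b)
      · by_cases hbv : b = v
        · rw [hbv, G.adj_comm, Alt_comm]
          constructor
          · intro hadj
            exact absurd hadj (no_adj_outside ⟨hRT, hRA⟩ hv a)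
          · intro halt
            rw [show (wl ++ [v]) ++ (v :: wr) = wl ++ v :: v :: wr by simp] at halt
            exact absurd halt (not_alt_vv a)
        · rw [hRA a b, hw',
            alt_extend_ne (ha := hav) (hb := hbv) (by intro x hx; simpa using hx)]
  | @dominating G V v hv h ih =>
    obtain ⟨wl, wr, hnl, hVl, hs, hRT, hRA⟩ := ih
    have hwlV : ∀ x, x ∈ wl ↔ x ∈ V := fun x => by rw [← hVl]; simp
    have hwrV : ∀ x, x ∈ wr → x ∈ V := fun x hx => (hwlV x).mp (by simpa using hs.mem hx)
    have hvwl : v ∉ wl := fun h' => hv ((hwlV v).mp h')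
    have hvwr : v ∉ wr := fun h' => hv (hwrV v h')
    have hnr : wr.Nodup := hs.nodup (List.nodup_reverse.mpr hnl)
    refine ⟨wl ++ [v], wr, ?_, ?_, ?_, ?_, ?_⟩
    · simp [List.nodup_append, hnl, hvwl]
      intro a ha hav; exact hvwl (hav ▸ ha)
    · rw [List.toFinset_append, hVl]; ext x; simp [or_comm]
    · rw [List.reverse_append]
      simpa using hs.cons v
    · ext x
      simp only [List.mem_toFinset, List.mem_append, Finset.mem_insert,
        List.mem_singleton]
      have h1 := hwlV x
      have h2 := hwrV x
      tauto
    · intro a b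
      have hw' : (wl ++ [v]) ++ wr = wl ++ v :: wr := by simp
      by_cases hav : a = v
      · rw [hav]
        by_cases hbv : b = v
        · rw [hbv]
          simp only [SimpleGraph.irrefl, false_iff]
          rintro ⟨hne, -⟩
          exact hne rfl
        · rw [hw']
          constructor
          · intro hadj
            rcases hadj with hadj | ⟨-, hbV, -⟩ | ⟨hbv', -, -⟩
            · exact absurd hadj (no_adj_outside ⟨hRT, hRA⟩ hv b)
            · exact alt_dom hvwl hvwr hbv hnl hnr ((hwlV b).mpr hbV)
            · exact absurd hbv' hbv
          · intro halt
            right; left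
            refine ⟨rfl, ?_, hbv⟩
            have hmem := halt.2.2.1
            rcases List.mem_append.mp hmem with h' | h'
            · exact (hwlV b).mp h'
            · rcases List.mem_cons.mp h' with h'' | h''
              · exact absurd h'' hbv
              · exact hwrV b h''
      · by_cases hbv : b = v
        · rw [hbv, (addDom G V v).adj_comm, Alt_comm, hw']
          constructor
          · intro hadj
            rcases hadj with hadj | ⟨-, haV, -⟩ | ⟨hav', -, -⟩
            · exact absurd hadj (no_adj_outside ⟨hRT, hRA⟩ hv a)
            · exact alt_dom hvwl hvwr hav hnl hnr ((hwlV a).mpr haV)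
            · exact absurd hav' hav
          · intro halt
            right; left
            refine ⟨rfl, ?_, hav⟩
            have hmem := halt.2.2.1
            rcases List.mem_append.mp hmem with h' | h'
            · exact (hwlV a).mp h'
            · rcases List.mem_cons.mp h' with h'' | h''
              · exact absurd h'' hav
              · exact hwrV a h''
        · have hGadj : (addDom G V v).Adj a b ↔ G.Adj a b := by
            constructor
            · intro hadj
              rcases hadj with hadj | ⟨hav', -, -⟩ | ⟨hbv', -, -⟩
              · exact hadj
              · exact absurd hav' hav
              · exact absurd hbv' hbv
            · exact fun h => Or.inl h
          rw [hGadj, hRA a b,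
            show (wl ++ [v]) ++ wr = wl ++ [v] ++ wr by simp,
            alt_extend_ne (ha := hav) (hb := hbv) (by intro x hx; simpa using hx)]

end Dir2
section Dir1

/-- The graph represented by a word. -/
def AltGraph (w : List α) : SimpleGraph α where
  Adj a b := Alt w a b
  symm := ⟨fun a b h => Alt_comm.mp h⟩
  loopless := ⟨fun a h => h.1 rfl⟩

@[simp] lemma altGraph_adj (w : List α) (a b : α) : (AltGraph w).Adj a b ↔ Alt w a b :=
  Iff.rfl

lemma mem_filter_ne {w : List α} {x a : α} :
    a ∈ w.filter (fun z => !decide (z = x)) ↔ a ∈ w ∧ a ≠ x := by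
  simp [List.mem_filter]

lemma alt_filter_ne {w : List α} {x a b : α} (ha : a ≠ x) (hb : b ≠ x) :
    Alt (w.filter (fun z => !decide (z = x))) a b ↔ Alt w a b := by
  unfold Alt
  have hfil : (w.filter (fun z => !decide (z = x))).filter (fun z => decide (z = a ∨ z = b)) =
      w.filter (fun z => decide (z = a ∨ z = b)) := by
    rw [List.filter_filter]
    apply List.filter_congr
    intro z hz
    by_cases h : z = a ∨ z = b
    · have hzx : z ≠ x := by rcases h with rfl | rfl <;> assumption
      simp [h, hzx]
    · simp [h]
  rw [hfil]
  simp only [mem_filter_ne]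
  constructor
  · rintro ⟨h1, h2, h3, h4⟩
    exact ⟨h1, h2.1, h3.1, h4⟩
  · rintro ⟨h1, h2, h3, h4⟩
    exact ⟨h1, ⟨h2, ha⟩, ⟨h3, hb⟩, h4⟩

lemma klocal_erase {w σ : List α} {x : α} (hK : KLocalWith 1 w σ) (hxσ : x ∈ σ) :
    KLocalWith 1 (w.filter (fun z => !decide (z = x))) (σ.erase x) := by
  obtain ⟨hn, hset, hbnd⟩ := hK
  have hmemσw : ∀ a : α, a ∈ σ ↔ a ∈ w := by
    intro a
    rw [← List.mem_toFinset, hset, List.mem_toFinset]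
  refine ⟨hn.erase x, ?_, ?_⟩
  · ext a
    simp only [List.mem_toFinset, mem_filter_ne]
    rw [hn.mem_erase_iff]
    rw [hmemσw a]
    tauto
  · intro i
    obtain ⟨l₁, l₂, hx1, hσeq, herase⟩ := List.exists_erase_eq hxσ
    rw [herase]
    have hsub : (w.filter (fun z => !decide (z = x))) <+ w := List.filter_sublist (l := w)
    rcases le_or_gt i l₁.length with hi | hi
    · have htake : (l₁ ++ l₂).take i = σ.take i := by
        rw [hσeq, List.take_append_of_le_length hi, List.take_append_of_le_length hi]
      rw [htake]
      calc blockCount ((w.filter (fun z => !decide (z = x))).map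
              (fun z => decide (z ∈ σ.take i)))
          ≤ blockCount (w.map (fun z => decide (z ∈ σ.take i))) :=
            blockCount_mono (hsub.map _)
        _ ≤ 1 := hbnd i
    · have hcong : ∀ z ∈ w.filter (fun y => !decide (y = x)),
          (decide (z ∈ (l₁ ++ l₂).take i)) = (decide (z ∈ σ.take (i + 1))) := by
        intro z hz
        have hzx : z ≠ x := (mem_filter_ne.mp hz).2
        have h1 : (l₁ ++ l₂).take i = l₁ ++ l₂.take (i - l₁.length) := by
          rw [List.take_append, List.take_of_length_le (le_of_lt hi)]
        have h2 : σ.take (i + 1) = l₁ ++ x :: l₂.take (i - l₁.length) := by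
          rw [hσeq, List.take_append,
            List.take_of_length_le (by omega : l₁.length ≤ i + 1)]
          congr 1
          have : i + 1 - l₁.length = (i - l₁.length) + 1 := by omega
          rw [this]
          rfl
        rw [h1, h2]
        apply decide_eq_decide.mpr
        simp only [List.mem_append, List.mem_cons]
        constructor
        · rintro (h | h)
          · exact Or.inl h
          · exact Or.inr (Or.inr h)
        · rintro (h | h | h)
          · exact Or.inl h
          · exact absurd h hzx
          · exact Or.inr h
      rw [List.map_congr_left hcong]
      calc blockCount ((w.filter (fun z => !decide (z = x))).map
              (fun z => decide (z ∈ σ.take (i + 1))))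
          ≤ blockCount (w.map (fun z => decide (z ∈ σ.take (i + 1)))) :=
            blockCount_mono (hsub.map _)
        _ ≤ 1 := hbnd (i + 1)

end Dir1
section Dir1b

lemma sublist_three {w A B C D : List α} {p q r : α}
    (hw : w = A ++ p :: (B ++ q :: (C ++ r :: D))) : [p, q, r] <+ w := by
  subst hw
  have h3 : [r] <+ C ++ r :: D :=
    ((List.nil_sublist D).cons₂ r).trans (List.sublist_append_right C _)
  have h2 : [q, r] <+ B ++ q :: (C ++ r :: D) :=
    (h3.cons₂ q).trans (List.sublist_append_right B _)
  have h1 : [p, q, r] <+ p :: (B ++ q :: (C ++ r :: D)) := h2.cons₂ p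
  exact h1.trans (List.sublist_append_right A _)

lemma tft_false {w : List α} {m : α → Bool}
    (hn : ¬ ([true, false, true] <+ w.map m)) {p q r : α}
    (hpat : [p, q, r] <+ w) (h1 : m p = true) (h2 : m q = false) (h3 : m r = true) :
    False := by
  apply hn
  have := hpat.map m
  simpa [h1, h2, h3] using this

lemma z_between {w P Q C : List α} {b z : α} (hw : w = P ++ b :: (Q ++ b :: C))
    (halt : Alt w b z) (hbQ : b ∉ Q) : z ∈ Q := by
  by_contra hzQ
  have hfil : w.filter (fun u => decide (u = b ∨ u = z)) =
      (P.filter (fun u => decide (u = b ∨ u = z))) ++ b ::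
        (b :: C.filter (fun u => decide (u = b ∨ u = z))) := by
    rw [hw]
    simp only [List.filter_append, List.filter_cons]
    have hQ : Q.filter (fun u => decide (u = b ∨ u = z)) = [] := by
      apply List.filter_eq_nil_iff.mpr
      intro u hu
      have hub : u ≠ b := fun h => hbQ (h ▸ hu)
      have huz : u ≠ z := fun h => hzQ (h ▸ hu)
      simp [hub, huz]
    rw [hQ]
    simp
  have hch := halt.2.2.2
  rw [hfil] at hch
  have : List.Chain' (· ≠ ·) [b, b] := by
    apply hch.infix
    exact ⟨P.filter (fun u => decide (u = b ∨ u = z)),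
      C.filter (fun u => decide (u = b ∨ u = z)), by simp⟩
  exact (List.isChain_pair.mp this) rfl

lemma order_split {σ : List α} (hn : σ.Nodup) {u v : α} (hu : u ∈ σ) (hv : v ∈ σ)
    (huv : u ≠ v) :
    ∃ s t x, σ = s ++ x :: t ∧ x ∉ s ∧ ((x = u ∧ v ∈ s) ∨ (x = v ∧ u ∈ s)) := by
  obtain ⟨s, t, hus, heq, -⟩ := List.exists_erase_eq hu
  have hv' : v ∈ s ∨ v ∈ t := by
    rw [heq] at hv
    rcases List.mem_append.mp hv with h | h
    · exact Or.inl h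
    · rcases List.mem_cons.mp h with h | h
      · exact absurd h.symm huv
      · exact Or.inr h
  rcases hv' with hvs | hvt
  · exact ⟨s, t, u, heq, hus, Or.inl ⟨rfl, hvs⟩⟩
  · obtain ⟨t1, t2, ht⟩ := List.append_of_mem hvt
    have heq2 : σ = (s ++ u :: t1) ++ v :: t2 := by
      rw [heq, ht]; simp
    have hvnot : v ∉ s ++ u :: t1 := by
      have := hn
      rw [heq2] at this
      have h2 := List.nodup_middle.mp this
      rcases List.nodup_cons.mp h2 with ⟨hnot, -⟩
      exact fun hmem => hnot (by
        rcases List.mem_append.mp hmem with h | h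
        · exact List.mem_append.mpr (Or.inl (List.mem_append.mpr (Or.inl h)))
        · exact List.mem_append.mpr (Or.inl (List.mem_append.mpr (Or.inr h))))
    exact ⟨s ++ u :: t1, t2, v, heq2, hvnot, Or.inr ⟨rfl, by simp⟩⟩

lemma y_mem_s {σ s t σt : List α} {x y : α} (hσ : σ = y :: σt)
    (heq : σ = s ++ x :: t) (hxy : x ≠ y) : y ∈ s := by
  cases s with
  | nil =>
    rw [hσ] at heq
    simp at heq
    exact absurd heq.1.symm hxy
  | cons a s' =>
    rw [hσ] at heq
    simp at heq
    rw [heq.1]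
    simp

lemma two_count_split {l : List α} {b : α} (h : 2 ≤ l.count b) :
    ∃ A B C, l = A ++ b :: (B ++ b :: C) ∧ b ∉ B := by
  have hb : b ∈ l := List.count_pos_iff.mp (by omega)
  obtain ⟨A, D, hbA, hl, -⟩ := List.exists_erase_eq hb
  have hcount : 1 ≤ D.count b := by
    rw [hl] at h
    simp [List.count_append, List.count_cons] at h
    have : A.count b = 0 := List.count_eq_zero.mpr hbA
    omega
  have hbD : b ∈ D := List.count_pos_iff.mp (by omega)
  obtain ⟨B, C, hbB, hD, -⟩ := List.exists_erase_eq hbD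
  exact ⟨A, B, C, by rw [hl, hD], hbB⟩

end Dir1b
section Dir1c

lemma count_side_left {w σ w1 w3 σt : List α} {y b : α}
    (hn : σ.Nodup) (hset : ∀ a : α, a ∈ σ ↔ a ∈ w)
    (hbnd : ∀ s t : List α, σ = s ++ t →
      ¬ ([true, false, true] <+ w.map (fun z => decide (z ∈ s))))
    (hσy : σ = y :: σt)
    (hw : w = w1 ++ y :: w3) (hy1 : y ∉ w1)
    (hby : b ≠ y) (halt : ∃ z, Alt w b z) :
    w1.count b ≤ 1 := by
  by_contra hc
  push_neg at hc
  obtain ⟨A, B, C, hw1, hbB⟩ := two_count_split (by omega : 2 ≤ w1.count b)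
  obtain ⟨z, hz⟩ := halt
  have hzb : z ≠ b := fun h => hz.1 h.symm
  have hzw : z ∈ w := hz.2.2.1
  have hbw : b ∈ w := hz.2.1
  have hwdecomp : w = A ++ b :: (B ++ b :: (C ++ y :: w3)) := by
    rw [hw, hw1]; simp
  have hzB : z ∈ B := z_between hwdecomp hz hbB
  have hzy : z ≠ y := fun h => hy1 (by
    rw [hw1]
    exact List.mem_append.mpr (Or.inr (List.mem_cons.mpr (Or.inr
      (List.mem_append.mpr (Or.inl (h ▸ hzB)))))))
  obtain ⟨B1, B2, hB⟩ := List.append_of_mem hzB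
  obtain ⟨s, t, x, hσeq, hxs, hcase⟩ :=
    order_split hn ((hset b).mpr hbw) ((hset z).mpr hzw) (Ne.symm hzb)
  have hNT := hbnd s (x :: t) hσeq
  rcases hcase with ⟨hxb, hzs⟩ | ⟨hxz, hbs⟩
  · -- x = b, z marked, b unmarked, y marked; pattern [z, b, y]
    have hbs : b ∉ s := hxb ▸ hxs
    have hys : y ∈ s := y_mem_s hσy (by rwa [hxb] at hσeq) hby
    refine tft_false hNT (p := z) (q := b) (r := y) ?_ (by simp [hzs]) (by simp [hbs])
      (by simp [hys])
    apply sublist_three (A := A ++ b :: B1) (B := B2) (C := C) (D := w3)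
    rw [hw, hw1, hB]; simp
  · -- x = z, b marked, z unmarked; pattern [b, z, b]
    have hzs : z ∉ s := hxz ▸ hxs
    refine tft_false hNT (p := b) (q := z) (r := b) ?_ (by simp [hbs]) (by simp [hzs])
      (by simp [hbs])
    apply sublist_three (A := A) (B := B1) (C := B2) (D := C ++ y :: w3)
    rw [hw, hw1, hB]; simp

lemma count_side_right {w σ w1 w3 σt : List α} {y b : α}
    (hn : σ.Nodup) (hset : ∀ a : α, a ∈ σ ↔ a ∈ w)
    (hbnd : ∀ s t : List α, σ = s ++ t →
      ¬ ([true, false, true] <+ w.map (fun z => decide (z ∈ s))))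
    (hσy : σ = y :: σt)
    (hw : w = w1 ++ y :: w3) (hy3 : y ∉ w3)
    (hby : b ≠ y) (halt : ∃ z, Alt w b z) :
    w3.count b ≤ 1 := by
  by_contra hc
  push_neg at hc
  obtain ⟨A, B, C, hw3, hbB⟩ := two_count_split (by omega : 2 ≤ w3.count b)
  obtain ⟨z, hz⟩ := halt
  have hzb : z ≠ b := fun h => hz.1 h.symm
  have hzw : z ∈ w := hz.2.2.1
  have hbw : b ∈ w := hz.2.1
  have hwdecomp : w = (w1 ++ y :: A) ++ b :: (B ++ b :: C) := by
    rw [hw, hw3]; simp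
  have hzB : z ∈ B := z_between hwdecomp hz hbB
  obtain ⟨B1, B2, hB⟩ := List.append_of_mem hzB
  obtain ⟨s, t, x, hσeq, hxs, hcase⟩ :=
    order_split hn ((hset b).mpr hbw) ((hset z).mpr hzw) (Ne.symm hzb)
  have hNT := hbnd s (x :: t) hσeq
  rcases hcase with ⟨hxb, hzs⟩ | ⟨hxz, hbs⟩
  · -- x = b unmarked; pattern [y, b, z]
    have hbs : b ∉ s := hxb ▸ hxs
    have hys : y ∈ s := y_mem_s hσy (by rwa [hxb] at hσeq) hby
    refine tft_false hNT (p := y) (q := b) (r := z) ?_ (by simp [hys]) (by simp [hbs])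
      (by simp [hzs])
    apply sublist_three (A := w1) (B := A) (C := B1) (D := B2 ++ b :: C)
    rw [hw, hw3, hB]; simp
  · -- x = z unmarked; pattern [b, z, b]
    have hzs : z ∉ s := hxz ▸ hxs
    refine tft_false hNT (p := b) (q := z) (r := b) ?_ (by simp [hbs]) (by simp [hzs])
      (by simp [hbs])
    apply sublist_three (A := w1 ++ y :: A) (B := B1) (C := B2) (D := C)
    rw [hw, hw3, hB]; simp

end Dir1c
section Dir1d

lemma dom_core {w σ : List α} (hK : KLocalWith 1 w σ) (hwne : w ≠ [])
    (hniso : ∀ x ∈ w, ∃ z, Alt w x z) :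
    ∃ y ∈ w, ∀ b ∈ w, b ≠ y → Alt w y b := by
  obtain ⟨hn, hset, hbnd⟩ := hK
  have hmem : ∀ a : α, a ∈ σ ↔ a ∈ w := by
    intro a
    rw [← List.mem_toFinset, hset, List.mem_toFinset]
  obtain ⟨y, σt, hσy⟩ : ∃ y σt, σ = y :: σt := by
    cases σ with
    | nil =>
      exfalso
      apply hwne
      cases w with
      | nil => rfl
      | cons a w' => exact absurd ((hmem a).mpr (by simp)) (by simp)
    | cons y σt => exact ⟨y, σt, rfl⟩
  have hyw : y ∈ w := (hmem y).mp (by rw [hσy]; simp)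
  have hbnd' : ∀ s t : List α, σ = s ++ t →
      ¬ ([true, false, true] <+ w.map (fun z => decide (z ∈ s))) := by
    intro s t hst
    have h := hbnd s.length
    rw [hst, List.take_left] at h
    exact noTFT h
  obtain ⟨w1, w3, hy1, hwdec, -⟩ := List.exists_erase_eq hyw
  have hy3 : y ∉ w3 := by
    intro hy3
    obtain ⟨B, C, hyB, hw3dec, -⟩ := List.exists_erase_eq hy3
    cases B with
    | nil =>
      obtain ⟨z, hz⟩ := hniso y hyw
      have hshape : w = w1 ++ y :: y :: C := by rw [hwdec, hw3dec]; simp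
      rw [hshape] at hz
      exact not_alt_vv z hz
    | cons e B' =>
      have hey : e ≠ y := fun h => hyB (by simp [h])
      have hNT := hbnd' [y] σt (by rw [hσy]; rfl)
      refine tft_false hNT (p := y) (q := e) (r := y) ?_ (by simp) (by simp [hey])
        (by simp)
      apply sublist_three (A := w1) (B := []) (C := B') (D := C)
      rw [hwdec, hw3dec]; simp
  refine ⟨y, hyw, ?_⟩
  intro b hbw hby
  have h1 : w1.count b ≤ 1 :=
    count_side_left hn hmem hbnd' hσy hwdec hy1 hby (hniso b hbw)
  have h3 : w3.count b ≤ 1 :=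
    count_side_right hn hmem hbnd' hσy hwdec hy3 hby (hniso b hbw)
  refine ⟨Ne.symm hby, hyw, hbw, ?_⟩
  have hf1 : w1.filter (fun z => decide (z = y ∨ z = b)) = List.replicate (w1.count b) b :=
    filter_pair_of_not_mem (fun x hx h => hy1 (by rwa [h] at hx))
  have hf3 : w3.filter (fun z => decide (z = y ∨ z = b)) = List.replicate (w3.count b) b :=
    filter_pair_of_not_mem (fun x hx h => hy3 (by rwa [h] at hx))
  have hfil : w.filter (fun z => decide (z = y ∨ z = b)) =
      List.replicate (w1.count b) b ++ y :: List.replicate (w3.count b) b := by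
    rw [hwdec]
    simp only [List.filter_append, List.filter_cons, hf1, hf3]
    simp
  rw [hfil]
  have hyb : y ≠ b := Ne.symm hby
  interval_cases hc1 : w1.count b <;> interval_cases hc3 : w3.count b <;>
    simp [List.Chain', List.isChain_cons_cons, hyb, hby]

lemma altGraph_eq_of_isolated {w : List α} {x : α} (hiso : ∀ b, ¬ Alt w x b) :
    AltGraph w = AltGraph (w.filter (fun z => !decide (z = x))) := by
  ext a b
  simp only [altGraph_adj]
  by_cases hax : a = x
  · rw [hax]
    constructor
    · intro h; exact absurd h (hiso b)
    · intro h
      exact absurd (mem_filter_ne.mp h.2.1).2 (by simp)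
  · by_cases hbx : b = x
    · rw [hbx]
      constructor
      · intro h; exact absurd (Alt_comm.mp h) (hiso a)
      · intro h
        exact absurd (mem_filter_ne.mp h.2.2.1).2 (by simp)
    · exact (alt_filter_ne hax hbx).symm

lemma toFinset_insert_filter {w : List α} {x : α} (hx : x ∈ w) :
    w.toFinset = insert x (w.filter (fun z => !decide (z = x))).toFinset := by
  ext a
  simp only [List.mem_toFinset, Finset.mem_insert, mem_filter_ne]
  constructor
  · intro h
    by_cases hax : a = x
    · exact Or.inl hax
    · exact Or.inr ⟨h, hax⟩
  · rintro (rfl | ⟨h, -⟩)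
    · exact hx
    · exact h

lemma length_filter_ne_lt {w : List α} {x : α} (hx : x ∈ w) :
    (w.filter (fun z => !decide (z = x))).length < w.length := by
  have hsub := List.filter_sublist (p := fun z => !decide (z = x)) (l := w)
  rcases lt_or_eq_of_le hsub.length_le with h | h
  · exact h
  · exfalso
    have := hsub.eq_of_length h
    have hxw' : x ∈ w.filter (fun z => !decide (z = x)) := this.symm ▸ hx
    exact absurd (mem_filter_ne.mp hxw').2 (by simp)

lemma altGraph_nil : AltGraph ([] : List α) = ⊥ := by
  ext a b
  simp only [altGraph_adj, SimpleGraph.bot_adj, iff_false]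
  rintro ⟨-, h, -⟩
  exact absurd h (by simp)

lemma thresh_of_klocal : ∀ (n : ℕ) (w σ : List α), w.length ≤ n → KLocalWith 1 w σ →
    IsThreshold (AltGraph w) w.toFinset := by
  intro n
  induction n with
  | zero =>
    intro w σ hlen _
    have hw : w = [] := List.length_eq_zero_iff.mp (Nat.le_zero.mp hlen)
    rw [hw, altGraph_nil]
    simpa using IsThreshold.empty
  | succ n ih =>
    intro w σ hlen hK
    by_cases hw : w = []
    · rw [hw, altGraph_nil]
      simpa using IsThreshold.empty
    · have hmem : ∀ a : α, a ∈ σ ↔ a ∈ w := by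
        intro a
        rw [← List.mem_toFinset, hK.2.1, List.mem_toFinset]
      by_cases hiso : ∃ x ∈ w, ∀ b, ¬ Alt w x b
      · obtain ⟨x, hxw, hxiso⟩ := hiso
        have hxσ : x ∈ σ := (hmem x).mpr hxw
        have hK' := klocal_erase hK hxσ
        have hlen' : (w.filter (fun z => !decide (z = x))).length ≤ n := by
          have := length_filter_ne_lt hxw
          omega
        have hIH := ih _ _ hlen' hK'
        rw [altGraph_eq_of_isolated hxiso, toFinset_insert_filter hxw]
        apply IsThreshold.isolated _ hIH
        simp only [List.mem_toFinset, mem_filter_ne]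
        rintro ⟨-, h⟩
        exact h rfl
      · push_neg at hiso
        obtain ⟨y, hyw, hdom⟩ := dom_core hK hw hiso
        have hyσ : y ∈ σ := (hmem y).mpr hyw
        have hK' := klocal_erase hK hyσ
        have hlen' : (w.filter (fun z => !decide (z = y))).length ≤ n := by
          have := length_filter_ne_lt hyw
          omega
        have hIH := ih _ _ hlen' hK'
        have hyw' : y ∉ w.filter (fun z => !decide (z = y)) := by
          intro h
          exact absurd (mem_filter_ne.mp h).2 (by simp)
        have hgr : AltGraph w =
            addDom (AltGraph (w.filter (fun z => !decide (z = y))))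
              (w.filter (fun z => !decide (z = y))).toFinset y := by
          ext a b
          show Alt w a b ↔ Alt (w.filter (fun z => !decide (z = y))) a b ∨
            (a = y ∧ b ∈ (w.filter (fun z => !decide (z = y))).toFinset ∧ b ≠ y) ∨
            (b = y ∧ a ∈ (w.filter (fun z => !decide (z = y))).toFinset ∧ a ≠ y)
          by_cases hay : a = y
          · rw [hay]
            constructor
            · intro halt
              have hby : b ≠ y := fun h => halt.1 h.symm
              refine Or.inr (Or.inl ⟨rfl, ?_, hby⟩)
              rw [List.mem_toFinset, mem_filter_ne]
              exact ⟨halt.2.2.1, hby⟩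
            · rintro (h | ⟨-, hb, hby⟩ | ⟨hby, -, hyy⟩)
              · exact absurd h.2.1 hyw'
              · rw [List.mem_toFinset, mem_filter_ne] at hb
                exact hdom b hb.1 hby
              · exact absurd rfl hyy
          · by_cases hby : b = y
            · rw [hby, @Alt_comm _ _ w a y, @Alt_comm _ _ _ a y]
              constructor
              · intro halt
                have hay' : a ≠ y := fun h => halt.1 h.symm
                refine Or.inr (Or.inr ⟨rfl, ?_, hay'⟩)
                rw [List.mem_toFinset, mem_filter_ne]
                exact ⟨halt.2.2.1, hay'⟩
              · rintro (h | ⟨hay', -, -⟩ | ⟨-, ha, hay'⟩)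
                · exact absurd h.2.1 hyw'
                · exact absurd hay' hay
                · rw [List.mem_toFinset, mem_filter_ne] at ha
                  exact hdom a ha.1 hay
            · rw [alt_filter_ne hay hby]
              constructor
              · exact fun h => Or.inl h
              · rintro (h | ⟨hay', -, -⟩ | ⟨hby', -, -⟩)
                · exact h
                · exact absurd hay' hay
                · exact absurd hby' hby
        rw [hgr, toFinset_insert_filter hyw]
        exact IsThreshold.dominating (by simpa using hyw') hIH

end Dir1d

/-- A graph is represented by a `1`-local word iff it is a threshold
graph. -/
theorem stmt15 {α : Type*} [DecidableEq α] :
    (∀ (w : List α) (V : Finset α) (G : SimpleGraph α),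
        KLocal 1 w → Represents w V G → IsThreshold G V) ∧
    (∀ (V : Finset α) (G : SimpleGraph α), IsThreshold G V →
        ∃ w : List α, KLocal 1 w ∧ Represents w V G) := by
  constructor
  · intro w V G hL hR
    obtain ⟨σ, hK⟩ := hL
    have h := thresh_of_klocal w.length w σ le_rfl hK
    have hG : G = AltGraph w := by
      ext a b
      rw [altGraph_adj]
      exact hR.2 a b
    rw [hG, ← hR.1]
    exact h
  · intro V G hT
    obtain ⟨wl, wr, hnl, hVl, hs, hRep⟩ := repr_threshold hT
    exact ⟨wl ++ wr, ⟨wl.reverse, klocal_of_struct hnl hs⟩, hRep⟩
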